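/- If A ∈ ℝ^{n×n} is Lyapunov diagonally stable, i.e., there exists a positive definite diagonal matrix P with AᵀP + PA negative definite, then -A is a P-matrix. -/

import Mathlib

open Matrix

/-- `M` is a P-matrix: every principal minor is positive. -/
def IsPMatrix {m : ℕ} (M : Matrix (Fin m) (Fin m) ℝ) : Prop :=
  ∀ s : Finset (Fin m), s.Nonempty →
    0 < (M.submatrix (fun i : s => (i : Fin m)) (fun j : s => (j : Fin m))).det

section Aux

variable {n m : Type*} [Fintype n] [Fintype m] [DecidableEq n] [DecidableEq m]

lemma posDef_submatrix_of_injective {M : Matrix n n ℝ} (hM : M.PosDef) {f : m → n}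
    (hf : Function.Injective f) : (M.submatrix f f).PosDef := by
  refine PosDef.of_dotProduct_mulVec_pos (hM.1.submatrix f) ?_
  intro v hv
  set x : n → ℝ := Function.extend f v 0 with hxdef
  have hxf : ∀ j, x (f j) = v j := fun j => hf.extend_apply v 0 j
  have hx0 : x ≠ 0 := by
    intro hcon
    apply hv
    funext j
    have := congrFun hcon (f j)
    simpa [hxf j] using this
  have hsum : ∀ g : n → ℝ, ∑ i, x i * g i = ∑ j, v j * g (f j) := by
    intro g
    have h1 : ∑ j, v j * g (f j) = ∑ j, x (f j) * g (f j) := by simp [hxf]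
    rw [h1]
    have h2 : ∑ i ∈ Finset.univ.image f, x i * g i = ∑ j, x (f j) * g (f j) :=
      Finset.sum_image (fun a _ b _ hab => hf hab)
    rw [← h2]
    refine (Finset.sum_subset (Finset.subset_univ _) ?_).symm
    intro i _ hi
    have hxi : x i = 0 := by
      have h3 : ¬∃ j, f j = i := by
        rintro ⟨j, rfl⟩
        exact hi (Finset.mem_image_of_mem f (Finset.mem_univ j))
      exact Function.extend_apply' v (0 : n → ℝ) i h3
    simp [hxi]
  have key : dotProduct (star v) ((M.submatrix f f) *ᵥ v) = dotProduct (star x) (M *ᵥ x) := by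
    simp only [star_trivial, dotProduct, mulVec, submatrix_apply]
    rw [hsum (fun i => ∑ j, M i j * x j)]
    refine Finset.sum_congr rfl fun j _ => ?_
    congr 1
    have := hsum (fun i => M (f j) i)
    calc ∑ j', M (f j) (f j') * v j' = ∑ j', v j' * M (f j) (f j') := by
          simp [mul_comm]
      _ = ∑ i, x i * M (f j) i := (hsum (fun i => M (f j) i)).symm
      _ = ∑ i, M (f j) i * x i := by simp [mul_comm]
  rw [key]
  exact hM.dotProduct_mulVec_pos hx0

lemma det_ne_zero_of_lyap (B P : Matrix m m ℝ) (hP : P.PosDef)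
    (hC : (-(Bᵀ * P + P * B)).PosDef) : B.det ≠ 0 := by
  intro hdet
  obtain ⟨v, hv, hBv⟩ := (Matrix.exists_mulVec_eq_zero_iff).mpr hdet
  have hpos := hC.dotProduct_mulVec_pos hv
  have e1 : dotProduct (star v) ((-(Bᵀ * P + P * B)) *ᵥ v) = 0 := by
    rw [neg_mulVec, dotProduct_neg, add_mulVec, dotProduct_add,
      ← mulVec_mulVec, ← mulVec_mulVec, dotProduct_mulVec, star_trivial,
      vecMul_transpose, hBv]
    simp
  rw [e1] at hpos
  exact lt_irrefl 0 hpos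

lemma det_neg_pos_of_lyap (B P : Matrix m m ℝ) (hP : P.PosDef)
    (hC : (-(Bᵀ * P + P * B)).PosDef) : 0 < (-B).det := by
  set f : ℝ → ℝ := fun t => ((1 - t) • (1 : Matrix m m ℝ) + t • (-B)).det with hf
  have hf0 : f 0 = 1 := by simp [hf]
  have hf1 : f 1 = (-B).det := by simp [hf]
  have hcont : Continuous f := by
    apply Continuous.matrix_det
    continuity
  have hne : ∀ t ∈ Set.Icc (0 : ℝ) 1, f t ≠ 0 := by
    rintro t ⟨ht0, ht1⟩ h0
    set Bt : Matrix m m ℝ := t • B - (1 - t) • 1 with hBt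
    have hBtLyap : (-(Btᵀ * P + P * Bt)).PosDef := by
      have heq : -(Btᵀ * P + P * Bt)
          = t • (-(Bᵀ * P + P * B)) + (2 * (1 - t)) • P := by
        simp only [hBt, transpose_sub, transpose_smul, transpose_one, sub_mul, mul_sub,
          smul_mul_assoc, mul_smul_comm, one_mul, mul_one]
        module
      rw [heq]
      refine PosDef.of_dotProduct_mulVec_pos ?_ ?_
      · have hPt : Pᵀ = P := by
          have h2 := hP.1
          rwa [Matrix.IsHermitian, conjTranspose_eq_transpose_of_trivial] at h2
        show _ = _
        rw [conjTranspose_eq_transpose_of_trivial]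
        simp only [transpose_add, transpose_smul, transpose_neg, transpose_mul,
          transpose_transpose, hPt]
        module
      · intro x hx
        have hq1 := hC.dotProduct_mulVec_pos hx
        have hq2 := hP.dotProduct_mulVec_pos hx
        have hval : dotProduct (star x)
              ((t • (-(Bᵀ * P + P * B)) + (2 * (1 - t)) • P) *ᵥ x)
            = t * dotProduct (star x) ((-(Bᵀ * P + P * B)) *ᵥ x)
              + (2 * (1 - t)) * dotProduct (star x) (P *ᵥ x) := by
          rw [add_mulVec, dotProduct_add, smul_mulVec, smul_mulVec,
            dotProduct_smul, dotProduct_smul]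
          simp [smul_eq_mul]
        rw [hval]
        rcases eq_or_lt_of_le ht0 with h | h
        · rw [← h]
          nlinarith [hq2]
        · nlinarith [mul_pos h hq1, mul_nonneg (by linarith : (0:ℝ) ≤ 2 * (1 - t)) hq2.le]
    have hdet : Bt.det ≠ 0 := det_ne_zero_of_lyap Bt P hP hBtLyap
    apply hdet
    have hneg : -Bt = (1 - t) • (1 : Matrix m m ℝ) + t • (-B) := by
      simp [hBt]; module
    have : (-Bt).det = 0 := by rw [hneg]; exact h0
    rw [det_neg] at this
    rcases mul_eq_zero.mp this with h | h
    · exact absurd h (by positivity)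
    · exact h
  by_contra hle
  push_neg at hle
  have hne1 : f 1 ≠ 0 := hne 1 ⟨by norm_num, le_refl 1⟩
  have hlt : f 1 < 0 := lt_of_le_of_ne (hf1 ▸ hle) hne1
  obtain ⟨t, ht, h0⟩ := intermediate_value_Icc' (by norm_num : (0:ℝ) ≤ 1)
    hcont.continuousOn ⟨le_of_lt hlt, by rw [hf0]; norm_num⟩
  exact hne t ht h0

lemma submatrix_mul_diag_right {M P : Matrix n n ℝ} (hP : P.IsDiag) {f : m → n}
    (hf : Function.Injective f) :
    (M.submatrix f f) * (P.submatrix f f) = (M * P).submatrix f f := by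
  ext i j
  simp only [mul_apply, submatrix_apply]
  have hLHS : ∑ k, M (f i) (f k) * P (f k) (f j) = M (f i) (f j) * P (f j) (f j) :=
    Finset.sum_eq_single j
      (fun k _ hk => by rw [hP (show f k ≠ f j from fun hc => hk (hf hc)), mul_zero])
      (fun hj => absurd (Finset.mem_univ j) hj)
  have hRHS : ∑ k, M (f i) k * P k (f j) = M (f i) (f j) * P (f j) (f j) :=
    Finset.sum_eq_single (f j)
      (fun k _ hk => by rw [hP hk, mul_zero])
      (fun hj => absurd (Finset.mem_univ (f j)) hj)
  rw [hLHS, hRHS]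

lemma submatrix_diag_mul_left {M P : Matrix n n ℝ} (hP : P.IsDiag) {f : m → n}
    (hf : Function.Injective f) :
    (P.submatrix f f) * (M.submatrix f f) = (P * M).submatrix f f := by
  ext i j
  simp only [mul_apply, submatrix_apply]
  have hLHS : ∑ k, P (f i) (f k) * M (f k) (f j) = P (f i) (f i) * M (f i) (f j) :=
    Finset.sum_eq_single i
      (fun k _ hk => by rw [hP (show f i ≠ f k from fun hc => hk (hf hc).symm), zero_mul])
      (fun hi => absurd (Finset.mem_univ i) hi)
  have hRHS : ∑ k, P (f i) k * M k (f j) = P (f i) (f i) * M (f i) (f j) :=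
    Finset.sum_eq_single (f i)
      (fun k _ hk => by rw [hP (fun hc => hk hc.symm), zero_mul])
      (fun hi => absurd (Finset.mem_univ (f i)) hi)
  rw [hLHS, hRHS]

end Aux

theorem diag_lyap_stable_neg_pmatrix {n : ℕ} (A : Matrix (Fin n) (Fin n) ℝ)
    (h : ∃ P : Matrix (Fin n) (Fin n) ℝ, P.IsDiag ∧ P.PosDef ∧ (-(Aᵀ * P + P * A)).PosDef) :
    IsPMatrix (-A) := by
  obtain ⟨P, hPdiag, hPpos, hLyap⟩ := h
  intro s _
  set f : s → Fin n := fun i => (i : Fin n) with hfdef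
  have hf : Function.Injective f := Subtype.coe_injective
  set B : Matrix s s ℝ := A.submatrix f f with hB
  set Ps : Matrix s s ℝ := P.submatrix f f with hPs
  have hPsPos : Ps.PosDef := posDef_submatrix_of_injective hPpos hf
  have hsub : -(Bᵀ * Ps + Ps * B) = (-(Aᵀ * P + P * A)).submatrix f f := by
    rw [hB, hPs, transpose_submatrix, submatrix_mul_diag_right hPdiag hf,
      submatrix_diag_mul_left hPdiag hf]
    ext i j
    simp
  have hLyapSub : (-(Bᵀ * Ps + Ps * B)).PosDef := by
    rw [hsub]
    exact posDef_submatrix_of_injective hLyap hf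
  have hgoal : ((-A).submatrix f f) = -B := by
    ext i j; simp [hB]
  rw [hgoal]
  exact det_neg_pos_of_lyap B Ps hPsPos hLyapSub
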